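/- Let p ∈ (0,1), let m be a natural number, set η := p^{2m+2}, and let θ be a real number. For a real parameter d ≥ 2, define P_d := (d−1)/d + η(sin²((m+1)θ) − (d−1)/d) and I_c(d) := (2m+2)² η² sin²((2m+2)θ)/(4 P_d (1 − P_d)). Then, as d → ∞: (i) if cos((m+1)θ) = 0 then I_c(d) = 0 for every d and hence I_c(d) → 0; (ii) if cos((m+1)θ) ≠ 0 then I_c(d) → 4 η (m+1)² sin²((m+1)θ)/(1 − η cos²((m+1)θ)). In case (ii) the limit satisfies the bound 4 η (m+1)² sin²((m+1)θ)/(1 − η cos²((m+1)θ)) ≤ 4 η (m+1)², which is the d → ∞ limit of the quantum Fisher information d (2m+2)² η²/(d η + 2(1−η)); so the limiting classical Fisher information is discontinuous in θ at the points cos((m+1)θ) = 0, where the bound is attained as a supremum but I_c vanishes. -/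

import Mathlib

open Filter

/-- Appendix C large-dimension analysis of the "even" classical Fisher
information `I_c(d)`: it vanishes identically when `cos((m+1)θ) = 0`; otherwise
it converges, as `d → ∞`, to `4η(m+1)² sin²((m+1)θ)/(1 - η cos²((m+1)θ))`, which
is bounded by `4η(m+1)²`, the `d → ∞` limit of the quantum Fisher information
`d(2m+2)²η²/(dη + 2(1-η))`. -/
theorem stmt_19 (p θ : ℝ) (m : ℕ) (hp : p ∈ Set.Ioo (0 : ℝ) 1)
    (η : ℝ) (hη : η = p ^ (2 * m + 2))
    (P Ic : ℝ → ℝ)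
    (hPd : ∀ d : ℝ, P d = (d - 1) / d + η * (Real.sin (((m : ℝ) + 1) * θ) ^ 2 - (d - 1) / d))
    (hIcd : ∀ d : ℝ, Ic d = (2 * (m : ℝ) + 2) ^ 2 * η ^ 2
        * Real.sin ((2 * (m : ℝ) + 2) * θ) ^ 2 / (4 * P d * (1 - P d))) :
    (Real.cos (((m : ℝ) + 1) * θ) = 0 →
      (∀ d : ℝ, 2 ≤ d → Ic d = 0) ∧ Tendsto Ic atTop (nhds 0)) ∧
    (Real.cos (((m : ℝ) + 1) * θ) ≠ 0 →
      Tendsto Ic atTop (nhds (4 * η * ((m : ℝ) + 1) ^ 2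
        * Real.sin (((m : ℝ) + 1) * θ) ^ 2
        / (1 - η * Real.cos (((m : ℝ) + 1) * θ) ^ 2)))) ∧
    (4 * η * ((m : ℝ) + 1) ^ 2 * Real.sin (((m : ℝ) + 1) * θ) ^ 2
        / (1 - η * Real.cos (((m : ℝ) + 1) * θ) ^ 2) ≤ 4 * η * ((m : ℝ) + 1) ^ 2) ∧
    Tendsto (fun d : ℝ => d * (2 * (m : ℝ) + 2) ^ 2 * η ^ 2 / (d * η + 2 * (1 - η)))
      atTop (nhds (4 * η * ((m : ℝ) + 1) ^ 2)) := by
  obtain ⟨hp0, hp1⟩ := hp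
  have hη0 : 0 < η := hη ▸ pow_pos hp0 _
  have hη1 : η < 1 := by
    rw [hη]; exact pow_lt_one₀ hp0.le hp1 (by omega)
  set s := Real.sin (((m : ℝ) + 1) * θ) with hs
  set c := Real.cos (((m : ℝ) + 1) * θ) with hc
  have hsin2 : Real.sin ((2 * (m : ℝ) + 2) * θ) = 2 * s * c := by
    have h : (2 * (m : ℝ) + 2) * θ = 2 * (((m : ℝ) + 1) * θ) := by ring
    rw [h, Real.sin_two_mul]
  have hsc : s ^ 2 + c ^ 2 = 1 := Real.sin_sq_add_cos_sq _
  have htend : Tendsto (fun d : ℝ => (d - 1) / d) atTop (nhds 1) := by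
    have h1 : Tendsto (fun d : ℝ => 1 - d⁻¹) atTop (nhds (1 - 0)) :=
      tendsto_const_nhds.sub tendsto_inv_atTop_zero
    rw [sub_zero] at h1
    refine Tendsto.congr' ?_ h1
    filter_upwards [eventually_ne_atTop (0 : ℝ)] with d hd
    field_simp
  have hPt : Tendsto P atTop (nhds (1 - η * c ^ 2)) := by
    have h2 : Tendsto (fun d : ℝ => (d - 1) / d + η * (s ^ 2 - (d - 1) / d)) atTop
        (nhds (1 + η * (s ^ 2 - 1))) :=
      htend.add (tendsto_const_nhds.mul (tendsto_const_nhds.sub htend))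
    have he : 1 + η * (s ^ 2 - 1) = 1 - η * c ^ 2 := by nlinarith [hsc]
    rw [he] at h2
    exact h2.congr fun d => (hPd d).symm
  have hc2le : η * c ^ 2 < 1 := by nlinarith [sq_nonneg c, Real.cos_sq_le_one (((m : ℝ) + 1) * θ)]
  refine ⟨?_, ?_, ?_, ?_⟩
  · intro hc0
    have hz : ∀ d : ℝ, Ic d = 0 := by
      intro d
      rw [hIcd d, hsin2, hc0]
      simp
    exact ⟨fun d _ => hz d, by simpa [funext hz] using tendsto_const_nhds⟩
  · intro hc0
    have hden : (4 * (1 - η * c ^ 2) * (1 - (1 - η * c ^ 2))) ≠ 0 := by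
      have : 0 < η * c ^ 2 := by positivity
      nlinarith
    have h3 : Tendsto (fun d : ℝ =>
        (2 * (m : ℝ) + 2) ^ 2 * η ^ 2 * Real.sin ((2 * (m : ℝ) + 2) * θ) ^ 2
          / (4 * P d * (1 - P d))) atTop
        (nhds ((2 * (m : ℝ) + 2) ^ 2 * η ^ 2 * Real.sin ((2 * (m : ℝ) + 2) * θ) ^ 2
          / (4 * (1 - η * c ^ 2) * (1 - (1 - η * c ^ 2))))) :=
      tendsto_const_nhds.div ((tendsto_const_nhds.mul hPt).mul
        (tendsto_const_nhds.sub hPt)) hden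
    have hval : (2 * (m : ℝ) + 2) ^ 2 * η ^ 2 * Real.sin ((2 * (m : ℝ) + 2) * θ) ^ 2
          / (4 * (1 - η * c ^ 2) * (1 - (1 - η * c ^ 2)))
        = 4 * η * ((m : ℝ) + 1) ^ 2 * s ^ 2 / (1 - η * c ^ 2) := by
      rw [hsin2]
      have h1 : (1 - η * c ^ 2) ≠ 0 := by nlinarith
      have h2 : η * c ^ 2 ≠ 0 := by positivity
      field_simp
      ring
    rw [hval] at h3
    exact h3.congr fun d => (hIcd d).symm
  · rcases eq_or_ne c 0 with h | h
    · have hs1 : s ^ 2 = 1 := by nlinarith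
      simp [h, hs1]
    · rw [div_le_iff₀ (by nlinarith)]
      have hs2 : s ^ 2 = 1 - c ^ 2 := by nlinarith
      rw [hs2]
      nlinarith [mul_nonneg hη0.le (mul_nonneg (sq_nonneg ((m : ℝ) + 1))
        (mul_nonneg (sub_nonneg.2 hη1.le) (sq_nonneg c)))]
  · have h1 : Tendsto (fun d : ℝ => (2 * (m : ℝ) + 2) ^ 2 * η ^ 2 / (η + 2 * (1 - η) * d⁻¹))
        atTop (nhds ((2 * (m : ℝ) + 2) ^ 2 * η ^ 2 / (η + 2 * (1 - η) * 0))) := by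
      refine tendsto_const_nhds.div (tendsto_const_nhds.add
        (tendsto_const_nhds.mul tendsto_inv_atTop_zero)) ?_
      simpa using hη0.ne'
    have h2 : (2 * (m : ℝ) + 2) ^ 2 * η ^ 2 / (η + 2 * (1 - η) * 0)
        = 4 * η * ((m : ℝ) + 1) ^ 2 := by
      field_simp
      rw [mul_zero, add_zero, mul_div_assoc, div_self hη0.ne']
      norm_num
    rw [h2] at h1
    refine Tendsto.congr' ?_ h1
    filter_upwards [eventually_gt_atTop (0 : ℝ)] with d hd
    have hd1 : η + 2 * (1 - η) * d⁻¹ ≠ 0 := by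
      have h0 : (0 : ℝ) < d⁻¹ := inv_pos.mpr hd
      nlinarith
    have hd2 : d * η + 2 * (1 - η) ≠ 0 := by nlinarith [mul_pos hd hη0]
    rw [div_eq_div_iff hd1 hd2]
    field_simp [hd.ne']
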